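/- Let n, L, k ∈ ℕ with k ≤ n, ε > 0, and L ≥ k²/ε. If H = {h : [n] → [L]} is a k-wise independent family of hash functions, then the induced family of orderings Π_h (ordering [n] by the pairs (h(i), i) lexicographically) is ε-almost k-wise independent: for every k-element subset S ⊆ [n], the statistical distance between the induced relative order on S and a uniformly random permutation of S is at most ε. -/

import Mathlib

open Finset Function

lemma sortKey_eq_iff {k L n : ℕ} {x : Fin k → Fin n} (hx : Function.Injective x)
    (y : Fin k → Fin L) (σ : Equiv.Perm (Fin k)) :
    (Function.Injective y ∧ Tuple.sort (fun i => toLex (y i, x i)) = σ) ↔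
      StrictMono (y ∘ σ) := by
  set f : Fin k → Lex (Fin L × Fin n) := fun i => toLex (y i, x i) with hf
  have hfinj : Function.Injective f := by
    intro i j h
    apply hx
    exact congrArg (fun z => (ofLex z).2) h
  constructor
  · rintro ⟨hy, rfl⟩
    have hmono : Monotone (f ∘ Tuple.sort f) := Tuple.monotone_sort f
    have hsm : StrictMono (f ∘ Tuple.sort f) :=
      hmono.strictMono_of_injective (hfinj.comp (Equiv.injective _))
    intro i j hij
    have h2 := hsm hij
    rcases Prod.Lex.lt_iff.1 h2 with h1 | ⟨h1, _⟩
    · exact h1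
    · exact absurd (Equiv.injective _ (hy h1)) hij.ne
  · intro hsm
    have hcomp : y = (y ∘ σ) ∘ σ.symm := by
      funext i; simp
    have hy : Function.Injective y := by
      rw [hcomp]; exact hsm.injective.comp (Equiv.injective _)
    refine ⟨hy, ?_⟩
    symm
    rw [Tuple.eq_sort_iff]
    constructor
    · intro i j hij
      rcases hij.eq_or_lt with rfl | hlt
      · exact le_rfl
      · exact le_of_lt (Prod.Lex.lt_iff.2 (Or.inl (hsm hlt)))
    · intro i j hij heq
      exact absurd (Equiv.injective σ (hfinj heq)) hij.ne

lemma fiber_card {k L n : ℕ} {x : Fin k → Fin n} (hx : Function.Injective x)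
    (σ : Equiv.Perm (Fin k)) :
    (Finset.univ.filter fun y : Fin k → Fin L =>
        Function.Injective y ∧ Tuple.sort (fun i => toLex (y i, x i)) = σ).card =
      (Finset.univ.filter fun z : Fin k → Fin L => StrictMono z).card := by
  classical
  apply Finset.card_bij' (fun y _ => y ∘ σ) (fun z _ => z ∘ σ.symm)
  · intro y hy
    simp only [Finset.mem_filter, Finset.mem_univ, true_and] at hy ⊢
    exact (sortKey_eq_iff hx y σ).1 hy
  · intro z hz
    simp only [Finset.mem_filter, Finset.mem_univ, true_and] at hz ⊢
    have : StrictMono ((z ∘ σ.symm) ∘ σ) := by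
      have : (z ∘ σ.symm) ∘ σ = z := by funext i; simp
      rw [this]; exact hz
    exact (sortKey_eq_iff hx _ σ).2 this
  · intro y _; funext i; simp
  · intro z _; funext i; simp

lemma collide_card {k L : ℕ} {i j : Fin k} (hij : i ≠ j) :
    (Finset.univ.filter fun y : Fin k → Fin L => y i = y j).card ≤ L ^ (k - 1) := by
  classical
  have hcard : Fintype.card ({m : Fin k // m ≠ i} → Fin L) = L ^ (k - 1) := by
    rw [Fintype.card_fun, Fintype.card_fin]
    congr 1
    have : Fintype.card {m : Fin k // m ≠ i} = Fintype.card {m : Fin k // ¬ m = i} := rfl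
    rw [this, Fintype.card_subtype_compl, Fintype.card_subtype_eq, Fintype.card_fin]
  calc (Finset.univ.filter fun y : Fin k → Fin L => y i = y j).card
      ≤ (Finset.univ : Finset ({m : Fin k // m ≠ i} → Fin L)).card := by
        apply Finset.card_le_card_of_injOn (fun y => fun m => y m.1)
        · intro y _; exact Finset.mem_univ _
        · intro y1 h1 y2 h2 heq
          simp only [Finset.coe_filter, Set.mem_setOf_eq, Finset.mem_univ, true_and] at h1 h2
          funext m
          by_cases hm : m = i
          · subst hm
            have hj : y1 j = y2 j := congrFun heq ⟨j, Ne.symm hij⟩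
            rw [h1, h2, hj]
          · exact congrFun heq ⟨m, hm⟩
    _ = L ^ (k - 1) := by rw [Finset.card_univ, hcard]

lemma noninj_card {k L : ℕ} :
    (Finset.univ.filter fun y : Fin k → Fin L => ¬ Function.Injective y).card
      ≤ k * k * L ^ (k - 1) := by
  classical
  have hsub : (Finset.univ.filter fun y : Fin k → Fin L => ¬ Function.Injective y) ⊆
      (Finset.univ : Finset (Fin k)).offDiag.biUnion
        (fun p => Finset.univ.filter fun y : Fin k → Fin L => y p.1 = y p.2) := by
    intro y hy
    rw [Finset.mem_filter] at hy
    simp only [Finset.mem_univ, true_and, Function.Injective] at hy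
    push_neg at hy
    obtain ⟨a, b, hab, hne⟩ := hy
    refine Finset.mem_biUnion.2 ⟨(a, b), ?_, ?_⟩
    · exact Finset.mem_offDiag.2 ⟨Finset.mem_univ _, Finset.mem_univ _, hne⟩
    · simp [hab]
  calc _ ≤ ((Finset.univ : Finset (Fin k)).offDiag.biUnion
        (fun p => Finset.univ.filter fun y : Fin k → Fin L => y p.1 = y p.2)).card :=
        Finset.card_le_card hsub
    _ ≤ ∑ p ∈ (Finset.univ : Finset (Fin k)).offDiag,
        (Finset.univ.filter fun y : Fin k → Fin L => y p.1 = y p.2).card :=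
        Finset.card_biUnion_le
    _ ≤ ∑ _p ∈ (Finset.univ : Finset (Fin k)).offDiag, L ^ (k - 1) := by
        apply Finset.sum_le_sum
        intro p hp
        exact collide_card (Finset.mem_offDiag.1 hp).2.2
    _ ≤ k * k * L ^ (k - 1) := by
        rw [Finset.sum_const, smul_eq_mul, Finset.offDiag_card, Finset.card_univ,
          Fintype.card_fin]
        exact Nat.mul_le_mul_right _ (Nat.sub_le _ _)

/-- Let `k ≤ n`, `ε > 0` and `L ≥ k²/ε`.  If the family (distribution) `H` of hash
functions `h : [n] → [L]` is `k`-wise independent, then the induced family of orderings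
`Π_h` (ordering `[n]` by the pairs `(h(i), i)` lexicographically) is `ε`-almost `k`-wise
independent: for every `k`-element subset (given by an injective `x : Fin k → [n]`), the
statistical distance between the induced relative order on the subset (the sorting
permutation of the keys `(h(x i), x i)`) and a uniformly random permutation is at
most `ε`. -/
theorem stmt_19 (n L k : ℕ) (hk : k ≤ n) (ε : ℝ) (hε : 0 < ε)
    (hL : (k : ℝ) ^ 2 / ε ≤ (L : ℝ))
    (H : PMF (Fin n → Fin L))
    (hkwise : ∀ x : Fin k → Fin n, Function.Injective x → ∀ y : Fin k → Fin L,
      (∑ f : Fin n → Fin L, (H f).toReal * (if ∀ i, f (x i) = y i then 1 else 0)) =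
        1 / (L : ℝ) ^ k) :
    ∀ x : Fin k → Fin n, Function.Injective x →
      ∀ T : Finset (Equiv.Perm (Fin k)),
        |(∑ f : Fin n → Fin L, (H f).toReal *
            (if Tuple.sort (fun i => toLex (f (x i), x i)) ∈ T then 1 else 0)) -
          (T.card : ℝ) / (Nat.factorial k : ℝ)| ≤ ε := by
  classical
  intro x hx T
  set c : (Fin k → Fin L) → ℝ :=
    fun y => if Tuple.sort (fun i => toLex (y i, x i)) ∈ T then 1 else 0 with hc
  -- Step 1: reduce to uniform distribution over y
  have step1 : (∑ f : Fin n → Fin L, (H f).toReal *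
        (if Tuple.sort (fun i => toLex (f (x i), x i)) ∈ T then 1 else 0)) =
      ∑ y : Fin k → Fin L, (1 / (L : ℝ) ^ k) * c y := by
    have h1 : ∀ f : Fin n → Fin L,
        (if Tuple.sort (fun i => toLex (f (x i), x i)) ∈ T then (1:ℝ) else 0) =
        ∑ y : Fin k → Fin L, (if ∀ i, f (x i) = y i then (1:ℝ) else 0) * c y := by
      intro f
      rw [Finset.sum_eq_single (fun i => f (x i))]
      · simp [hc]
      · intro y _ hne
        have : ¬ (∀ i, f (x i) = y i) := fun h => hne (funext fun i => (h i).symm)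
        simp [this]
      · simp
    calc (∑ f : Fin n → Fin L, (H f).toReal *
          (if Tuple.sort (fun i => toLex (f (x i), x i)) ∈ T then 1 else 0))
        = ∑ f : Fin n → Fin L, ∑ y : Fin k → Fin L,
            (H f).toReal * ((if ∀ i, f (x i) = y i then (1:ℝ) else 0) * c y) := by
          apply Finset.sum_congr rfl
          intro f _
          rw [h1 f, Finset.mul_sum]
      _ = ∑ y : Fin k → Fin L, (∑ f : Fin n → Fin L,
            (H f).toReal * (if ∀ i, f (x i) = y i then (1:ℝ) else 0)) * c y := by
          rw [Finset.sum_comm]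
          apply Finset.sum_congr rfl
          intro y _
          rw [Finset.sum_mul]
          apply Finset.sum_congr rfl
          intro f _
          ring
      _ = ∑ y : Fin k → Fin L, (1 / (L : ℝ) ^ k) * c y := by
          apply Finset.sum_congr rfl
          intro y _
          rw [hkwise x hx y]
  rw [step1]
  -- counts
  set M := (Finset.univ.filter fun z : Fin k → Fin L => StrictMono z).card with hM
  set Full := (Finset.univ.filter fun y : Fin k → Fin L =>
      Tuple.sort (fun i => toLex (y i, x i)) ∈ T).card with hFull
  set B := (Finset.univ.filter fun y : Fin k → Fin L => ¬ Function.Injective y).card with hB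
  set G := (Finset.univ.filter fun y : Fin k → Fin L =>
      Function.Injective y ∧ Tuple.sort (fun i => toLex (y i, x i)) ∈ T).card with hG
  set I := (Finset.univ.filter fun y : Fin k → Fin L => Function.Injective y).card with hI
  clear_value M Full B G I
  have hsum : ∑ y : Fin k → Fin L, (1 / (L : ℝ) ^ k) * c y
      = (Full : ℝ) / (L : ℝ) ^ k := by
    rw [← Finset.mul_sum, hc, Finset.sum_boole, hFull]
    ring
  rw [hsum]
  clear_value c
  clear step1 hsum hc c hkwise
  -- G = T.card * M
  have hGeq : G = T.card * M := by
    have := Finset.card_eq_sum_card_fiberwise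
      (f := fun y : Fin k → Fin L => Tuple.sort (fun i => toLex (y i, x i)))
      (s := Finset.univ.filter fun y : Fin k → Fin L =>
        Function.Injective y ∧ Tuple.sort (fun i => toLex (y i, x i)) ∈ T)
      (t := T)
      (by intro y hy; exact (Finset.mem_filter.1 hy).2.2)
    rw [hG, this]
    have heach : ∀ σ ∈ T, ((Finset.univ.filter fun y : Fin k → Fin L =>
        Function.Injective y ∧ Tuple.sort (fun i => toLex (y i, x i)) ∈ T).filter
          fun y => Tuple.sort (fun i => toLex (y i, x i)) = σ).card = M := by
      intro σ hσ
      rw [Finset.filter_filter]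
      have h2 : ∀ y : Fin k → Fin L,
          ((Function.Injective y ∧ Tuple.sort (fun i => toLex (y i, x i)) ∈ T) ∧
            Tuple.sort (fun i => toLex (y i, x i)) = σ) ↔
          (Function.Injective y ∧ Tuple.sort (fun i => toLex (y i, x i)) = σ) := by
        intro y
        constructor
        · rintro ⟨⟨h1, _⟩, h3⟩; exact ⟨h1, h3⟩
        · rintro ⟨h1, h2⟩; exact ⟨⟨h1, h2 ▸ hσ⟩, h2⟩
      rw [Finset.filter_congr (fun y _ => h2 y), hM]
      exact fiber_card hx σ
    rw [Finset.sum_congr rfl heach, Finset.sum_const, smul_eq_mul]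
  -- I = k! * M
  have hIeq : I = Nat.factorial k * M := by
    have := Finset.card_eq_sum_card_fiberwise
      (f := fun y : Fin k → Fin L => Tuple.sort (fun i => toLex (y i, x i)))
      (s := Finset.univ.filter fun y : Fin k → Fin L => Function.Injective y)
      (t := Finset.univ)
      (by intro y _; exact Finset.mem_univ _)
    rw [hI, this]
    have heach : ∀ σ ∈ (Finset.univ : Finset (Equiv.Perm (Fin k))),
        ((Finset.univ.filter fun y : Fin k → Fin L => Function.Injective y).filter
          fun y => Tuple.sort (fun i => toLex (y i, x i)) = σ).card = M := by
      intro σ _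
      rw [Finset.filter_filter, hM]
      exact fiber_card hx σ
    rw [Finset.sum_congr rfl heach, Finset.sum_const, smul_eq_mul, Finset.card_univ,
      Fintype.card_perm, Fintype.card_fin]
  -- I + B = L^k
  have hIB : I + B = L ^ k := by
    rw [hI, hB, Finset.card_filter_add_card_filter_not, Finset.card_univ,
      Fintype.card_fun, Fintype.card_fin, Fintype.card_fin]
  -- G ≤ Full ≤ G + B
  have hGFull : G ≤ Full := by
    rw [hG, hFull]
    apply Finset.card_le_card
    intro y hy
    simp only [Finset.mem_filter] at hy ⊢
    exact ⟨hy.1, hy.2.2⟩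
  have hFullGB : Full ≤ G + B := by
    have hsplit := Finset.card_filter_add_card_filter_not
      (s := Finset.univ.filter fun y : Fin k → Fin L =>
        Tuple.sort (fun i => toLex (y i, x i)) ∈ T)
      (p := fun y => Function.Injective y)
    rw [← hFull] at hsplit
    have h1 : ((Finset.univ.filter fun y : Fin k → Fin L =>
        Tuple.sort (fun i => toLex (y i, x i)) ∈ T).filter
          fun y => Function.Injective y).card ≤ G := by
      rw [hG]
      apply Finset.card_le_card
      intro y hy
      simp only [Finset.mem_filter, Finset.mem_univ, true_and] at hy ⊢
      exact ⟨hy.2, hy.1⟩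
    have h2 : ((Finset.univ.filter fun y : Fin k → Fin L =>
        Tuple.sort (fun i => toLex (y i, x i)) ∈ T).filter
          fun y => ¬ Function.Injective y).card ≤ B := by
      rw [hB]
      apply Finset.card_le_card
      intro y hy
      simp only [Finset.mem_filter, Finset.mem_univ, true_and] at hy ⊢
      exact hy.2
    calc Full = _ + _ := hsplit.symm
      _ ≤ G + B := Nat.add_le_add h1 h2
  -- positivity of L^k
  have hq : (0:ℝ) < (L : ℝ) ^ k := by
    rcases Nat.eq_zero_or_pos k with rfl | hk0
    · norm_num
    · have hL0 : (0:ℝ) < (L:ℝ) := by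
        have hk2 : (0:ℝ) < (k:ℝ) ^ 2 := by positivity
        exact lt_of_lt_of_le (div_pos hk2 hε) hL
      positivity
  have hTk : (T.card : ℝ) ≤ (Nat.factorial k : ℝ) := by
    have : T.card ≤ Fintype.card (Equiv.Perm (Fin k)) := Finset.card_le_univ T
    rw [Fintype.card_perm, Fintype.card_fin] at this
    exact_mod_cast this
  have hfacpos : (0:ℝ) < (Nat.factorial k : ℝ) := by
    exact_mod_cast Nat.factorial_pos k
  have hMq : (Nat.factorial k : ℝ) * M ≤ (L : ℝ) ^ k := by
    have h1 : Nat.factorial k * M ≤ L ^ k := by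
      rw [← hIeq, ← hIB]; exact Nat.le_add_right _ _
    calc (Nat.factorial k : ℝ) * M = ((Nat.factorial k * M : ℕ) : ℝ) := by push_cast; ring
      _ ≤ ((L ^ k : ℕ) : ℝ) := by exact_mod_cast h1
      _ = (L : ℝ) ^ k := by push_cast; ring
  have hrat0 : (0:ℝ) ≤ (T.card : ℝ) / (Nat.factorial k : ℝ) := by positivity
  have hrat1 : (T.card : ℝ) / (Nat.factorial k : ℝ) ≤ 1 := by
    rw [div_le_one hfacpos]; exact hTk
  have hqeq : (L : ℝ) ^ k = (Nat.factorial k : ℝ) * M + B := by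
    calc (L : ℝ) ^ k = ((L ^ k : ℕ) : ℝ) := by push_cast; ring
      _ = ((Nat.factorial k * M + B : ℕ) : ℝ) := by rw [← hIeq, hIB]
      _ = (Nat.factorial k : ℝ) * M + B := by push_cast; ring
  -- A1 and A2
  have hA1 : (T.card : ℝ) / (Nat.factorial k : ℝ) * (L : ℝ) ^ k ≤ (Full : ℝ) + B := by
    rw [hqeq, mul_add]
    have e1 : (T.card : ℝ) / (Nat.factorial k : ℝ) * ((Nat.factorial k : ℝ) * M)
        = (T.card : ℝ) * M := by field_simp
    have e2 : (T.card : ℝ) / (Nat.factorial k : ℝ) * B ≤ B := by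
      have hB0 : (0:ℝ) ≤ (B:ℝ) := by positivity
      nlinarith
    have e3 : (T.card : ℝ) * M ≤ (Full : ℝ) := by
      have h4 : T.card * M ≤ Full := hGeq ▸ hGFull
      exact_mod_cast h4
    linarith
  have hA2 : (Full : ℝ) ≤ (T.card : ℝ) / (Nat.factorial k : ℝ) * (L : ℝ) ^ k + B := by
    have e3 : (Full : ℝ) ≤ (T.card : ℝ) * M + B := by
      have h4 : Full ≤ T.card * M + B := hGeq ▸ hFullGB
      exact_mod_cast h4
    have e1 : (T.card : ℝ) * M = (T.card : ℝ) / (Nat.factorial k : ℝ) *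
        ((Nat.factorial k : ℝ) * M) := by field_simp
    have e2 : (T.card : ℝ) / (Nat.factorial k : ℝ) * ((Nat.factorial k : ℝ) * M)
        ≤ (T.card : ℝ) / (Nat.factorial k : ℝ) * (L : ℝ) ^ k :=
      mul_le_mul_of_nonneg_left hMq hrat0
    linarith
  -- conclude
  have hexpand : (Full : ℝ) / (L : ℝ) ^ k - (T.card : ℝ) / (Nat.factorial k : ℝ)
      = ((Full : ℝ) - (T.card : ℝ) / (Nat.factorial k : ℝ) * (L : ℝ) ^ k) / (L : ℝ) ^ k := by
    rw [sub_div, mul_div_assoc, div_self (ne_of_gt hq), mul_one]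
  have hdiff : |(Full : ℝ) / (L : ℝ) ^ k - (T.card : ℝ) / (Nat.factorial k : ℝ)|
      ≤ (B : ℝ) / (L : ℝ) ^ k := by
    rw [hexpand, abs_div, abs_of_pos hq]
    gcongr
    rw [abs_le]
    constructor <;> linarith
  have hBq : (B : ℝ) / (L : ℝ) ^ k ≤ ε := by
    rcases Nat.eq_zero_or_pos k with rfl | hk0
    · have hB0 : B = 0 := by
        rw [hB]
        apply Finset.card_eq_zero.2
        apply Finset.filter_eq_empty_iff.2
        intro y _
        simp only [not_not]
        exact Function.injective_of_subsingleton y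
      rw [hB0]
      simp [le_of_lt hε]
    · have hL0 : (0:ℝ) < (L:ℝ) := by
        have hk2 : (0:ℝ) < (k:ℝ) ^ 2 := by positivity
        exact lt_of_lt_of_le (div_pos hk2 hε) hL
      have hBbound : (B : ℝ) ≤ (k:ℝ) * k * (L:ℝ) ^ (k - 1) := by
        rw [hB]
        have h5 := noninj_card (k := k) (L := L)
        calc ((Finset.univ.filter fun y : Fin k → Fin L => ¬ Function.Injective y).card : ℝ)
            ≤ ((k * k * L ^ (k-1) : ℕ) : ℝ) := by exact_mod_cast h5
          _ = (k:ℝ) * k * (L:ℝ) ^ (k - 1) := by push_cast; ring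
      have hpow : (L:ℝ) ^ (k - 1) * (L:ℝ) = (L:ℝ) ^ k := by
        rw [← pow_succ, Nat.sub_add_cancel hk0]
      have hk2L : (k:ℝ)^2 ≤ (L:ℝ) * ε := by
        rw [div_le_iff₀ hε] at hL
        linarith
      rw [div_le_iff₀ hq]
      calc (B:ℝ) ≤ (k:ℝ) * k * (L:ℝ) ^ (k - 1) := hBbound
        _ = (k:ℝ)^2 * (L:ℝ) ^ (k-1) := by ring
        _ ≤ (L:ℝ) * ε * (L:ℝ) ^ (k-1) := by
            apply mul_le_mul_of_nonneg_right hk2L (by positivity)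
        _ = ε * ((L:ℝ) ^ (k-1) * (L:ℝ)) := by ring
        _ = ε * (L:ℝ) ^ k := by rw [hpow]
  linarith [hdiff, hBq, abs_nonneg ((Full : ℝ) / (L:ℝ)^k - (T.card : ℝ) / (Nat.factorial k : ℝ))]
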